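/- Every ray attainable from the Yu–Oh states by a finite sequence of Lüders measurements of Yu–Oh projectors is spanned by a vector with real entries: for every n : ℕ and every L ∈ Sₙ there exists a nonzero w ∈ L such that every coordinate of w is real (equals its own complex conjugate). -/

import Mathlib

open scoped InnerProductSpace

noncomputable def v : Fin 13 → EuclideanSpace ℂ (Fin 3) :=
  ![!₂[1, 0, 0], !₂[0, 1, 0], !₂[0, 0, 1],
    !₂[0, 1, -1], !₂[0, 1, 1], !₂[1, 0, -1], !₂[1, 0, 1], !₂[1, -1, 0], !₂[1, 1, 0],
    !₂[1, 1, 1], !₂[-1, 1, 1], !₂[1, -1, 1], !₂[1, 1, -1]]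

noncomputable def P (i : Fin 13) (w : EuclideanSpace ℂ (Fin 3)) : EuclideanSpace ℂ (Fin 3) :=
  (Submodule.orthogonalProjectionOnto (Submodule.span ℂ {v i}) w : EuclideanSpace ℂ (Fin 3))

noncomputable def S : ℕ → Set (Submodule ℂ (EuclideanSpace ℂ (Fin 3)))
  | 0 => {L | ∃ i : Fin 13, L = Submodule.span ℂ {v i}}
  | (n + 1) => {L | ∃ L' ∈ S n, ∃ w ∈ L', w ≠ 0 ∧ ∃ i : Fin 13,
      (P i w ≠ 0 ∧ L = Submodule.span ℂ {P i w}) ∨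
      (w - P i w ≠ 0 ∧ L = Submodule.span ℂ {w - P i w})}

lemma real_of_mem (z : ℂ) (h : z = 1 ∨ z = 0 ∨ z = -1) : (starRingEnd ℂ) z = z := by
  rcases h with rfl | rfl | rfl <;> simp

lemma v_real (i : Fin 13) (k : Fin 3) : (starRingEnd ℂ) (v i k) = v i k := by
  fin_cases i <;> fin_cases k <;>
    exact real_of_mem _ (by first
      | exact .inl rfl | exact .inr (.inl rfl) | exact .inr (.inr rfl))

lemma inner_real (x y : EuclideanSpace ℂ (Fin 3))
    (hx : ∀ k, (starRingEnd ℂ) (x k) = x k) (hy : ∀ k, (starRingEnd ℂ) (y k) = y k) :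
    (starRingEnd ℂ) ⟪x, y⟫_ℂ = ⟪x, y⟫_ℂ := by
  simp only [PiLp.inner_apply, RCLike.inner_apply, map_sum, map_mul, starRingEnd_self_apply]
  refine Finset.sum_congr rfl fun k _ => ?_
  simp [hx k, hy k]

lemma P_real (i : Fin 13) (u : EuclideanSpace ℂ (Fin 3))
    (hu : ∀ k, (starRingEnd ℂ) (u k) = u k) :
    ∀ k, (starRingEnd ℂ) (P i u k) = P i u k := by
  intro k
  have : P i u = (⟪v i, u⟫_ℂ / ((‖v i‖ ^ 2 : ℝ) : ℂ)) • v i :=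
    Submodule.starProjection_singleton ℂ u
  rw [this]
  simp only [PiLp.smul_apply, smul_eq_mul, map_mul, map_div₀, Complex.conj_ofReal,
    inner_real (v i) u (v_real i) hu, v_real]

lemma P_smul (i : Fin 13) (c : ℂ) (w : EuclideanSpace ℂ (Fin 3)) :
    P i (c • w) = c • P i w := by
  simp [P, map_smul]

lemma key : ∀ n : ℕ, ∀ L ∈ S n, ∃ u : EuclideanSpace ℂ (Fin 3), u ≠ 0 ∧
    L = Submodule.span ℂ {u} ∧ ∀ k, (starRingEnd ℂ) (u k) = u k := by
  intro n
  induction n with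
  | zero =>
    rintro L ⟨i, rfl⟩
    refine ⟨v i, ?_, rfl, v_real i⟩
    have h1 : ∀ (x : EuclideanSpace ℂ (Fin 3)) (k : Fin 3), x k = 1 → x ≠ 0 := by
      rintro x k hk rfl
      simp at hk
    fin_cases i <;> first
      | exact h1 _ 0 rfl | exact h1 _ 1 rfl | exact h1 _ 2 rfl
  | succ n ih =>
    rintro L ⟨L', hL', w, hw, hw0, i, hcase⟩
    obtain ⟨u, hu0, rfl, hureal⟩ := ih L' hL'
    obtain ⟨c, rfl⟩ := Submodule.mem_span_singleton.mp hw
    have hc : c ≠ 0 := fun h => hw0 (by simp [h])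
    have hcu : IsUnit c := hc.isUnit
    rcases hcase with ⟨hne, rfl⟩ | ⟨hne, rfl⟩
    · refine ⟨P i u, ?_, ?_, P_real i u hureal⟩
      · intro h; exact hne (by rw [P_smul, h, smul_zero])
      · rw [P_smul, Submodule.span_singleton_smul_eq hcu]
    · refine ⟨u - P i u, ?_, ?_, fun k => ?_⟩
      · intro h
        exact hne (by rw [P_smul, ← smul_sub, h, smul_zero])
      · rw [P_smul, ← smul_sub, Submodule.span_singleton_smul_eq hcu]
      · simp only [PiLp.sub_apply, map_sub, hureal k, P_real i u hureal k]

theorem attainable_rays_spanned_by_real_vector :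
    ∀ n : ℕ, ∀ L ∈ S n, ∃ w ∈ L, w ≠ 0 ∧
      ∀ k : Fin 3, (starRingEnd ℂ) (w k) = w k := by
  intro n L hL
  obtain ⟨u, hu0, rfl, hureal⟩ := key n L hL
  exact ⟨u, Submodule.mem_span_singleton_self u, hu0, hureal⟩
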